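/- Let k be an M-field and F a set of M-polynomials over k in variables X₁,…,Xₙ. Then an M-polynomial f vanishes on all solutions of F = 0 in K^M for every field extension K of k if and only if f lies in the radical of the ideal generated by {σ^m(g) : g ∈ F, m ∈ M}. -/

import Mathlib

open MvPolynomial

section Aux

variable {M : Type*} [Monoid M] {k : Type*} [Field k] (σk : M → (k →+* k)) (n : ℕ)

noncomputable def shiftHom (m : M) :
    MvPolynomial (M × Fin n) k →+* MvPolynomial (M × Fin n) k :=
  (MvPolynomial.rename (fun p : M × Fin n => (m * p.1, p.2))).toRingHom.comp
    (MvPolynomial.map (σk m))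

lemma shiftHom_apply (m : M) (g : MvPolynomial (M × Fin n) k) :
    shiftHom σk n m g
      = rename (fun p : M × Fin n => (m * p.1, p.2)) (MvPolynomial.map (σk m) g) := rfl

lemma eval₂_shiftHom {K : Type*} [CommRing K] (ι : k →+* K) (v : M × Fin n → K)
    (m : M) (g : MvPolynomial (M × Fin n) k) :
    eval₂ ι v (shiftHom σk n m g)
      = eval₂ (ι.comp (σk m)) (fun p : M × Fin n => v (m * p.1, p.2)) g := by
  rw [shiftHom_apply, eval₂_rename, eval₂_map]
  rfl

lemma shiftHom_shiftHom (hmul : ∀ m₁ m₂ : M, σk (m₁ * m₂) = (σk m₁).comp (σk m₂))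
    (ℓ m : M) (g : MvPolynomial (M × Fin n) k) :
    shiftHom σk n ℓ (shiftHom σk n m g) = shiftHom σk n (ℓ * m) g := by
  simp only [shiftHom_apply]
  have hfun : ((fun p : M × Fin n => (ℓ * p.1, p.2)) ∘ (fun p : M × Fin n => (m * p.1, p.2)))
      = fun p : M × Fin n => (ℓ * m * p.1, p.2) := by
    funext p; simp [mul_assoc]
  rw [map_rename, rename_rename, hfun, hmul, ← MvPolynomial.map_map]

lemma eval₂_hom_var {K : Type*} [CommRing K] (φ : MvPolynomial (M × Fin n) k →+* K)
    (q : MvPolynomial (M × Fin n) k) :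
    eval₂ (φ.comp MvPolynomial.C) (fun p : M × Fin n => φ (MvPolynomial.X p)) q = φ q := by
  conv_rhs => rw [← eval₂_eta q]
  rw [eval₂_comp_left]
  rfl

lemma shiftHom_one (hone : σk 1 = RingHom.id k) (g : MvPolynomial (M × Fin n) k) :
    shiftHom σk n 1 g = g := by
  rw [shiftHom_apply, hone]
  simp only [MvPolynomial.map_id]
  have h1 : (fun p : M × Fin n => ((1 : M) * p.1, p.2)) = id := by
    funext p; simp
  rw [h1, rename_id, AlgHom.id_apply]

end Aux

/-- Alternative strong Nullstellensatz: over any `M`-field `k`, an `M`-polynomial `f`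
vanishes on all solutions of `F = 0` in `K^M` for every field extension `K/k` iff
`f` lies in the radical of the ideal generated by all shifts of elements of `F`. -/
theorem stmt5.{u} (M : Type u) [Monoid M] (k : Type u) [Field k]
    (σk : M → (k →+* k)) (hone : σk 1 = RingHom.id k)
    (hmul : ∀ m₁ m₂ : M, σk (m₁ * m₂) = (σk m₁).comp (σk m₂))
    (n : ℕ) (F : Set (MvPolynomial (M × Fin n) k)) (f : MvPolynomial (M × Fin n) k) :
    (∀ (K : Type u) [Field K] (ι : k →+* K), ∀ x : Fin n → M → K,
        (∀ g ∈ F, ∀ ℓ : M,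
            MvPolynomial.eval₂ (ι.comp (σk ℓ)) (fun p : M × Fin n => x p.2 (ℓ * p.1)) g = 0) →
        ∀ ℓ : M, MvPolynomial.eval₂ (ι.comp (σk ℓ)) (fun p : M × Fin n => x p.2 (ℓ * p.1)) f = 0)
    ↔ f ∈ (Ideal.span {q : MvPolynomial (M × Fin n) k |
        ∃ g ∈ F, ∃ m : M, q = MvPolynomial.rename (fun p : M × Fin n => (m * p.1, p.2))
          (MvPolynomial.map (σk m) g)}).radical := by
  set_option synthInstance.maxHeartbeats 1000000 in
  set_option maxHeartbeats 2000000 in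
  have hSS : {q : MvPolynomial (M × Fin n) k |
        ∃ g ∈ F, ∃ m : M, q = MvPolynomial.rename (fun p : M × Fin n => (m * p.1, p.2))
          (MvPolynomial.map (σk m) g)}
      = {q : MvPolynomial (M × Fin n) k | ∃ g ∈ F, ∃ m : M, q = shiftHom σk n m g} := rfl
  rw [hSS]
  set S : Set (MvPolynomial (M × Fin n) k) :=
    {q | ∃ g ∈ F, ∃ m : M, q = shiftHom σk n m g} with hS
  constructor
  · -- hard direction
    intro h
    by_contra hf
    rw [Ideal.radical_eq_sInf, Submodule.mem_sInf] at hf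
    push_neg at hf
    obtain ⟨P, ⟨hle, hP⟩, hfP⟩ := hf
    haveI := hP
    let Q := MvPolynomial (M × Fin n) k ⧸ P
    let K := FractionRing Q
    let φ : MvPolynomial (M × Fin n) k →+* K :=
      (algebraMap Q K).comp (Ideal.Quotient.mk P)
    have key : ∀ q : MvPolynomial (M × Fin n) k, ∀ ℓ : M,
        eval₂ ((φ.comp MvPolynomial.C).comp (σk ℓ))
          (fun p : M × Fin n => φ (MvPolynomial.X ((ℓ * p.1, p.2) : M × Fin n))) q
          = φ (shiftHom σk n ℓ q) := by
      intro q ℓ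
      rw [← eval₂_hom_var (n := n) φ (shiftHom σk n ℓ q), eval₂_shiftHom]
    have hmain := h K (φ.comp MvPolynomial.C)
      (fun j m => φ (MvPolynomial.X ((m, j) : M × Fin n)))
      (by
        intro g hg ℓ
        have h1 : shiftHom σk n ℓ g ∈ P :=
          hle (Ideal.subset_span ⟨g, hg, ℓ, rfl⟩)
        have h2 : φ (shiftHom σk n ℓ g) = 0 := by
          show (algebraMap Q K) (Ideal.Quotient.mk P (shiftHom σk n ℓ g)) = 0
          rw [Ideal.Quotient.eq_zero_iff_mem.mpr h1, map_zero]
        calc eval₂ ((φ.comp MvPolynomial.C).comp (σk ℓ))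
              (fun p : M × Fin n => φ (MvPolynomial.X ((ℓ * p.1, p.2) : M × Fin n))) g
            = φ (shiftHom σk n ℓ g) := key g ℓ
          _ = 0 := h2) 1
    have hf0 : φ f = 0 := by
      have := key f 1
      rw [shiftHom_one σk n hone] at this
      rw [← this]
      exact hmain
    have hinj : Function.Injective (algebraMap Q K) := IsFractionRing.injective Q K
    have hmk : Ideal.Quotient.mk P f = 0 := by
      apply hinj
      rw [map_zero]
      exact hf0
    exact hfP (Ideal.Quotient.eq_zero_iff_mem.mp hmk)
  · -- easy direction
    intro hf K _ ι x hx ℓ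
    have hshift : shiftHom σk n ℓ f ∈ (Ideal.span S).radical := by
      obtain ⟨N, hN⟩ := hf
      refine ⟨N, ?_⟩
      rw [← map_pow]
      have hmap : Ideal.map (shiftHom σk n ℓ) (Ideal.span S) ≤ Ideal.span S := by
        rw [Ideal.map_span, Ideal.span_le]
        rintro q ⟨q', ⟨g, hg, m, rfl⟩, rfl⟩
        exact Ideal.subset_span ⟨g, hg, ℓ * m, (shiftHom_shiftHom σk n hmul ℓ m g)⟩
      exact hmap (Ideal.mem_map_of_mem _ hN)
    let E : MvPolynomial (M × Fin n) k →+* K := eval₂Hom ι (fun p : M × Fin n => x p.2 p.1)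
    have hker : Ideal.span S ≤ RingHom.ker E := by
      rw [Ideal.span_le]
      rintro q ⟨g, hg, m, rfl⟩
      have := hx g hg m
      show shiftHom σk n m g ∈ RingHom.ker E
      rw [RingHom.mem_ker]
      show eval₂ ι (fun p : M × Fin n => x p.2 p.1) (shiftHom σk n m g) = 0
      rw [eval₂_shiftHom]
      exact this
    have hprime : (RingHom.ker E).IsPrime := RingHom.ker_isPrime E
    have hrad : (Ideal.span S).radical ≤ RingHom.ker E := by
      rw [← hprime.radical]
      exact Ideal.radical_mono hker
    have h0 := hrad hshift
    rw [RingHom.mem_ker] at h0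
    have h1 : eval₂ ι (fun p : M × Fin n => x p.2 p.1) (shiftHom σk n ℓ f) = 0 := h0
    rw [eval₂_shiftHom] at h1
    exact h1
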